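/- Let a < −l < 0 < l < b be real numbers with l > 0, set L₁ = −l − a and L₂ = b − l. Let F₁ : (a,−l) × ℝ → ℝ and F₂ : (l,b) × ℝ → ℝ be Carathéodory functions (measurable in x, continuous in the second variable) such that for i = 1, 2 there exist constants m_i > 0 and M_i > 0 with (F_i(x,r) − F_i(x,s))(r − s) ≥ m_i|r − s|², |F_i(x,r) − F_i(x,s)| ≤ M_i|r − s| and F_i(x,0) = 0 for all r, s ∈ ℝ and a.e. x in the respective interval. Let p : ℝ → ℝ be Lipschitz continuous with constant L_p > 0 and satisfy p(r) > 0 for r < 2l and p(r) < 0 for r > 2l; assume min(m₁, m₂) > 2 L_p max(L₁, L₂). Let f₁ ∈ L²(a,−l) and f₂ ∈ L²(l,b). For g₁ ∈ L²(a,−l) and g₂ ∈ L²(l,b) define θ(g₁,g₂) = 2l − ∫_a^{−l} g₁(t) dt − ∫_l^b g₂(t) dt, and set K = {(g₁,g₂) ∈ L²(a,−l) × L²(l,b) : θ(g₁,g₂) ≥ 0}. Then there exists a unique pair (g₁,g₂) ∈ K such that for every (h₁,h₂) ∈ K: ∫_a^{−l} F₁(x, g₁(x)) (h₁(x) − g₁(x))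 dx + ∫_l^b F₂(x, g₂(x)) (h₂(x) − g₂(x)) dx − p(θ(g₁,g₂)) (θ(h₁,h₂) − θ(g₁,g₂)) ≥ ∫_a^{−l} f₁(x) (∫_a^x (h₁(t) − g₁(t)) dt) dx + ∫_l^b f₂(x) (∫_x^b (g₂(t) − h₂(t)) dt) dx. -/

import Mathlib

open MeasureTheory
open Set
open scoped RealInnerProductSpace ENNReal


/-- The current length of the spring, expressed through the derivatives
`g₁ = du₁/dx` and `g₂ = du₂/dx` of the displacement fields:
`θ(g₁,g₂) = 2l − ∫_a^{−l} g₁ − ∫_l^b g₂`. -/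
noncomputable def springLength (a b l : ℝ) (g₁ g₂ : ℝ → ℝ) : ℝ :=
  2 * l - (∫ t in Set.Ioo a (-l), g₁ t) - ∫ t in Set.Ioo l b, g₂ t




section Stampacchia

variable {H : Type*} [NormedAddCommGroup H] [InnerProductSpace ℝ H] [CompleteSpace H]

theorem my_stampacchia {K : Set H} (hKc : Convex ℝ K) (hKcl : IsClosed K) (hKne : K.Nonempty)
    (B : H → H) (α M : ℝ) (hα : 0 < α) (hM : 0 < M)
    (hlip : ∀ x y, ‖B x - B y‖ ≤ M * ‖x - y‖)
    (hmono : ∀ x y, α * ‖x - y‖ ^ 2 ≤ ⟪B x - B y, x - y⟫) :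
    ∃! x, x ∈ K ∧ ∀ y ∈ K, 0 ≤ ⟪B x, y - x⟫ := by
  have hcomp : IsComplete K := hKcl.isComplete
  -- the metric projection onto K
  have hex : ∀ u : H, ∃ v, v ∈ K ∧ ∀ w ∈ K, ⟪u - v, w - v⟫ ≤ 0 := by
    intro u
    obtain ⟨v, hvK, hv⟩ := exists_norm_eq_iInf_of_complete_convex hKne hcomp hKc u
    exact ⟨v, hvK, (norm_eq_iInf_iff_real_inner_le_zero hKc hvK).1 hv⟩
  let proj : H → H := fun u => (hex u).choose
  have proj_mem : ∀ u, proj u ∈ K := fun u => (hex u).choose_spec.1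
  have proj_char : ∀ u, ∀ w ∈ K, ⟪u - proj u, w - proj u⟫ ≤ 0 :=
    fun u => (hex u).choose_spec.2
  have proj_nonexp : ∀ u v, ‖proj u - proj v‖ ≤ ‖u - v‖ := by
    intro u v
    have h1 := proj_char u (proj v) (proj_mem v)
    have h2 := proj_char v (proj u) (proj_mem u)
    have key : ‖proj u - proj v‖ ^ 2 ≤ ⟪u - v, proj u - proj v⟫ := by
      have e : ⟪u - v, proj u - proj v⟫
          = ‖proj u - proj v‖ ^ 2
            - ⟪u - proj u, proj v - proj u⟫ - ⟪v - proj v, proj u - proj v⟫ := by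
        rw [← real_inner_self_eq_norm_sq]
        simp only [inner_sub_left, inner_sub_right]
        ring
      nlinarith [h1, h2]
    have hcs := real_inner_le_norm (u - v) (proj u - proj v)
    nlinarith [norm_nonneg (proj u - proj v), norm_nonneg (u - v)]
  -- the contraction map
  set ρ : ℝ := α / M ^ 2 with hρ
  have hρpos : 0 < ρ := div_pos hα (by positivity)
  set c : ℝ := max 0 (1 - α ^ 2 / M ^ 2) with hc
  have hc1 : c < 1 := by
    apply max_lt one_pos
    have : 0 < α ^ 2 / M ^ 2 := by positivity
    linarith
  have hcnn : 0 ≤ c := le_max_left _ _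
  have keyest : ∀ x y : H, ‖(x - ρ • B x) - (y - ρ • B y)‖ ^ 2 ≤ c * ‖x - y‖ ^ 2 := by
    intro x y
    have e : (x - ρ • B x) - (y - ρ • B y) = (x - y) - ρ • (B x - B y) := by
      rw [smul_sub]; abel
    rw [e]
    have expand : ‖(x - y) - ρ • (B x - B y)‖ ^ 2
        = ‖x - y‖ ^ 2 - 2 * (ρ * ⟪B x - B y, x - y⟫) + ρ ^ 2 * ‖B x - B y‖ ^ 2 := by
      rw [norm_sub_sq_real, norm_smul, real_inner_smul_right, real_inner_comm,
        Real.norm_eq_abs, abs_of_pos hρpos]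
      ring
    have hbd1 : α * ‖x - y‖ ^ 2 ≤ ⟪B x - B y, x - y⟫ := hmono x y
    have hbd2 : ‖B x - B y‖ ^ 2 ≤ M ^ 2 * ‖x - y‖ ^ 2 := by
      have := hlip x y
      nlinarith [norm_nonneg (B x - B y), norm_nonneg (x - y)]
    have step : ‖(x - y) - ρ • (B x - B y)‖ ^ 2 ≤ (1 - α ^ 2 / M ^ 2) * ‖x - y‖ ^ 2 := by
      rw [expand]
      have hρM : ρ ^ 2 * M ^ 2 = α ^ 2 / M ^ 2 := by
        rw [hρ]; field_simp
      have h2ρα : 2 * ρ * α = 2 * (α ^ 2 / M ^ 2) := by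
        rw [hρ]; field_simp
      nlinarith [sq_nonneg (‖x - y‖)]
    calc ‖(x - y) - ρ • (B x - B y)‖ ^ 2 ≤ (1 - α ^ 2 / M ^ 2) * ‖x - y‖ ^ 2 := step
      _ ≤ c * ‖x - y‖ ^ 2 := by
          apply mul_le_mul_of_nonneg_right (le_max_right _ _) (sq_nonneg _)
  -- contraction on the subtype K
  haveI : Nonempty K := hKne.to_subtype
  haveI : CompleteSpace K := hcomp.completeSpace_coe
  let Φ : K → K := fun x => ⟨proj ((x : H) - ρ • B (x : H)), proj_mem _⟩
  have sqrtc_lt : Real.sqrt c < 1 := by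
    have := Real.sqrt_lt_sqrt hcnn hc1
    simpa using this
  have hlipΦ : ∀ x y : K, dist (Φ x) (Φ y) ≤ Real.sqrt c * dist x y := by
    intro x y
    have h1 : dist (Φ x) (Φ y)
        = ‖proj ((x : H) - ρ • B x) - proj ((y : H) - ρ • B y)‖ := by
      rw [Subtype.dist_eq, dist_eq_norm]
    have h2 : dist x y = ‖(x : H) - y‖ := by rw [Subtype.dist_eq, dist_eq_norm]
    rw [h1, h2]
    refine le_trans (proj_nonexp _ _) ?_
    have h3 := keyest (x : H) y
    have h4 : ‖((x : H) - ρ • B x) - ((y : H) - ρ • B y)‖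
        = Real.sqrt (‖((x : H) - ρ • B x) - ((y : H) - ρ • B y)‖ ^ 2) := by
      rw [Real.sqrt_sq (norm_nonneg _)]
    rw [h4]
    calc Real.sqrt (‖((x : H) - ρ • B x) - ((y : H) - ρ • B y)‖ ^ 2)
        ≤ Real.sqrt (c * ‖(x : H) - y‖ ^ 2) := Real.sqrt_le_sqrt h3
      _ = Real.sqrt c * ‖(x : H) - y‖ := by
          rw [Real.sqrt_mul hcnn, Real.sqrt_sq (norm_nonneg _)]
  have hcontr : ContractingWith ⟨Real.sqrt c, Real.sqrt_nonneg c⟩ Φ := by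
    constructor
    · exact_mod_cast sqrtc_lt
    · exact LipschitzWith.of_dist_le_mul hlipΦ
  obtain ⟨x₀, hfix⟩ := hcontr.exists_fixedPoint (Classical.arbitrary K)
    (edist_ne_top _ _)
  obtain ⟨hfix, -⟩ := hfix
  have hx₀fix : proj ((x₀ : H) - ρ • B (x₀ : H)) = (x₀ : H) := by
    have := congrArg (Subtype.val) hfix
    exact this
  refine ⟨(x₀ : H), ⟨x₀.2, ?_⟩, ?_⟩
  · intro y hy
    have := proj_char ((x₀ : H) - ρ • B (x₀ : H)) y hy
    rw [hx₀fix] at this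
    have e : ((x₀ : H) - ρ • B (x₀ : H)) - (x₀ : H) = -(ρ • B (x₀ : H)) := by abel
    rw [e, inner_neg_left, real_inner_smul_left] at this
    nlinarith
  · rintro z ⟨hzK, hz⟩
    have h1 := hz (x₀ : H) x₀.2
    have h2 := (fun h => h) (by
      intro y hy
      have := proj_char ((x₀ : H) - ρ • B (x₀ : H)) y hy
      rw [hx₀fix] at this
      have e : ((x₀ : H) - ρ • B (x₀ : H)) - (x₀ : H) = -(ρ • B (x₀ : H)) := by abel
      rw [e, inner_neg_left, real_inner_smul_left] at this
      nlinarith : ∀ y ∈ K, 0 ≤ ⟪B (x₀ : H), y - (x₀ : H)⟫)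
    have h3 := h2 z hzK
    have hmono' := hmono z (x₀ : H)
    have e : ⟪B z - B (x₀ : H), z - (x₀ : H)⟫
        = -⟪B z, (x₀ : H) - z⟫ - ⟪B (x₀ : H), z - (x₀ : H)⟫ := by
      simp only [inner_sub_left, inner_sub_right]
      ring
    have hle : α * ‖z - (x₀ : H)‖ ^ 2 ≤ 0 := by
      rw [e] at hmono'
      linarith
    have : ‖z - (x₀ : H)‖ ^ 2 ≤ 0 := by
      nlinarith
    have : z - (x₀ : H) = 0 := by
      have := le_antisymm this (sq_nonneg _)
      have := pow_eq_zero_iff (n := 2) (by norm_num) |>.1 this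
      exact norm_eq_zero.1 this
    have := sub_eq_zero.1 this
    exact this

end Stampacchia



section Interval

variable {a c : ℝ}

lemma fin_meas (a c : ℝ) : IsFiniteMeasure (volume.restrict (Ioo a c)) := by
  constructor
  rw [Measure.restrict_apply_univ, Real.volume_Ioo]
  exact ENNReal.ofReal_lt_top

/-- the constant function 1 as an element of L². -/
noncomputable def constOne (a c : ℝ) : Lp ℝ 2 (volume.restrict (Ioo a c)) :=
  haveI := fin_meas a c
  (memLp_const (1:ℝ)).toLp _

lemma constOne_coe : (constOne a c : ℝ → ℝ) =ᵐ[volume.restrict (Ioo a c)] fun _ => 1 :=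
  haveI := fin_meas a c
  MemLp.coeFn_toLp _

lemma inner_constOne (g : Lp ℝ 2 (volume.restrict (Ioo a c))) :
    ⟪constOne a c, g⟫ = ∫ x, g x ∂(volume.restrict (Ioo a c)) := by
  rw [L2.inner_def]
  refine integral_congr_ae ?_
  filter_upwards [constOne_coe] with x hx
  simp [hx]

lemma norm_constOne_sq (hac : a ≤ c) : ‖constOne a c‖ ^ 2 = c - a := by
  haveI := fin_meas a c
  rw [← real_inner_self_eq_norm_sq, inner_constOne]
  have : (fun x => (constOne a c : ℝ → ℝ) x) =ᵐ[volume.restrict (Ioo a c)] fun _ => 1 :=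
    constOne_coe
  rw [integral_congr_ae this, integral_const, smul_eq_mul, mul_one,
    measureReal_restrict_apply_univ, Real.volume_real_Ioo_of_le hac]

lemma integral_abs_le_sqrt_norm (hac : a ≤ c) (u : Lp ℝ 2 (volume.restrict (Ioo a c))) :
    ∫ x, |u x| ∂(volume.restrict (Ioo a c)) ≤ Real.sqrt (c - a) * ‖u‖ := by
  haveI := fin_meas a c
  have habs : MemLp (fun x => |(u : ℝ → ℝ) x|) 2 (volume.restrict (Ioo a c)) := by
    simpa [Real.norm_eq_abs] using (Lp.memLp u).norm
  have h1 : ⟪constOne a c, habs.toLp _⟫ = ∫ x, |u x| ∂(volume.restrict (Ioo a c)) := by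
    rw [inner_constOne]
    exact integral_congr_ae habs.coeFn_toLp
  have h2 : ‖habs.toLp _‖ = ‖u‖ := by
    rw [Lp.norm_def, Lp.norm_def, eLpNorm_congr_ae habs.coeFn_toLp]
    congr 1
    simpa [Real.norm_eq_abs] using eLpNorm_norm (F := ℝ) (f := (u : ℝ → ℝ)) (p := 2)
      (μ := volume.restrict (Ioo a c))
  have h3 : ‖constOne a c‖ = Real.sqrt (c - a) := by
    have := norm_constOne_sq (a := a) (c := c) hac
    rw [← this, Real.sqrt_sq (norm_nonneg _)]
  rw [← h1, ← h2, ← h3]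
  exact real_inner_le_norm _ _

section Nemytskii

variable {F : ℝ → ℝ → ℝ} {M m : ℝ}

lemma nemytskii_aesm
    (hmeas : ∀ r, Measurable fun x => F x r) (hcont : ∀ x, Continuous fun r => F x r)
    {g : ℝ → ℝ} (hg : AEStronglyMeasurable g (volume.restrict (Ioo a c))) :
    AEStronglyMeasurable (fun x => F x (g x)) (volume.restrict (Ioo a c)) := by
  set μ := volume.restrict (Ioo a c)
  have hF : StronglyMeasurable (Function.uncurry fun r x => F x r) :=
    stronglyMeasurable_uncurry_of_continuous_of_stronglyMeasurable
      (fun x => hcont x) (fun r => (hmeas r).stronglyMeasurable)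
  obtain ⟨g', hg'meas, hgg'⟩ := hg.aemeasurable
  refine ⟨fun x => F x (g' x), ?_, ?_⟩
  · exact hF.comp_measurable (hg'meas.prodMk measurable_id)
  · filter_upwards [hgg'] with x hx
    rw [hx]

lemma nemytskii_memLp
    (hmeas : ∀ r, Measurable fun x => F x r) (hcont : ∀ x, Continuous fun r => F x r)
    (hlip : ∀ᵐ x ∂(volume.restrict (Ioo a c)), ∀ r s, |F x r - F x s| ≤ M * |r - s|)
    (hzero : ∀ᵐ x ∂(volume.restrict (Ioo a c)), F x 0 = 0)
    (g : Lp ℝ 2 (volume.restrict (Ioo a c))) :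
    MemLp (fun x => F x (g x)) 2 (volume.restrict (Ioo a c)) := by
  refine MemLp.of_le_mul (c := M) (Lp.memLp g)
    (nemytskii_aesm hmeas hcont (Lp.aestronglyMeasurable g)) ?_
  filter_upwards [hlip, hzero] with x h1 h2
  have := h1 (g x) 0
  rw [h2, sub_zero, sub_zero] at this
  simpa [Real.norm_eq_abs] using this

end Nemytskii

end Interval

section Operator

variable {μ : Measure ℝ}

lemma L2_real_inner (U V : Lp ℝ 2 μ) : ⟪U, V⟫ = ∫ x, U x * V x ∂μ := by
  rw [L2.inner_def]
  simp [RCLike.inner_apply]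
  congr 1; funext x; exact mul_comm _ _

lemma L2_real_integrable_mul (U V : Lp ℝ 2 μ) :
    Integrable (fun x => U x * V x) μ := by
  have := L2.integrable_inner (𝕜 := ℝ) U V
  simpa [RCLike.inner_apply, mul_comm] using this

lemma toLp_sub_norm_le {φ ψ : ℝ → ℝ} (hφ : MemLp φ 2 μ) (hψ : MemLp ψ 2 μ)
    {M : ℝ} (hM : 0 ≤ M) (g h : Lp ℝ 2 μ)
    (hb : ∀ᵐ x ∂μ, |φ x - ψ x| ≤ M * |g x - h x|) :
    ‖hφ.toLp φ - hψ.toLp ψ‖ ≤ M * ‖g - h‖ := by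
  rw [← MemLp.toLp_sub, Lp.norm_def, eLpNorm_congr_ae (MemLp.coeFn_toLp _)]
  have key : eLpNorm (φ - ψ) 2 μ ≤ eLpNorm (M • (⇑(g - h))) 2 μ := by
    apply eLpNorm_mono_ae
    filter_upwards [hb, Lp.coeFn_sub g h] with x h1 h2
    simp only [Pi.sub_apply, Pi.smul_apply, smul_eq_mul, Real.norm_eq_abs]
    rw [h2]
    calc |φ x - ψ x| ≤ M * |(g : ℝ → ℝ) x - h x| := h1
      _ ≤ |M * ((g : ℝ → ℝ) x - h x)| := by rw [abs_mul, abs_of_nonneg hM]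
  have key2 : eLpNorm (M • (⇑(g - h))) 2 μ ≤ ‖M‖₊ • eLpNorm (⇑(g - h)) 2 μ :=
    eLpNorm_const_smul_le
  have fin : (‖M‖₊ • eLpNorm (⇑(g - h)) 2 μ) ≠ ⊤ :=
    (ENNReal.mul_lt_top ENNReal.coe_lt_top (Lp.eLpNorm_lt_top _)).ne
  calc ENNReal.toReal (eLpNorm (φ - ψ) 2 μ)
      ≤ ENNReal.toReal (‖M‖₊ • eLpNorm (⇑(g - h)) 2 μ) :=
        ENNReal.toReal_mono fin (key.trans key2)
    _ = M * ‖g - h‖ := by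
        rw [ENNReal.smul_def, smul_eq_mul, ENNReal.toReal_mul, Lp.norm_def]
        congr 1
        simp [abs_of_nonneg hM]

lemma toLp_sub_inner_ge {φ ψ : ℝ → ℝ} (hφ : MemLp φ 2 μ) (hψ : MemLp ψ 2 μ)
    {m : ℝ} (g h : Lp ℝ 2 μ)
    (hb : ∀ᵐ x ∂μ, m * ((g : ℝ → ℝ) x - h x) ^ 2 ≤ (φ x - ψ x) * ((g : ℝ → ℝ) x - h x)) :
    m * ‖g - h‖ ^ 2 ≤ ⟪hφ.toLp φ - hψ.toLp ψ, g - h⟫ := by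
  set U : Lp ℝ 2 μ := hφ.toLp φ - hψ.toLp ψ with hU
  set V : Lp ℝ 2 μ := g - h with hV
  have hUcoe : (U : ℝ → ℝ) =ᵐ[μ] φ - ψ := by
    rw [hU, ← MemLp.toLp_sub]
    exact MemLp.coeFn_toLp _
  have hVcoe : (V : ℝ → ℝ) =ᵐ[μ] ⇑g - ⇑h := Lp.coeFn_sub g h
  have e1 : ⟪U, V⟫ = ∫ x, U x * V x ∂μ := L2_real_inner U V
  have e2 : m * ‖V‖ ^ 2 = ∫ x, m * (V x * V x) ∂μ := by
    rw [← real_inner_self_eq_norm_sq, L2_real_inner, ← integral_const_mul]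
  rw [e1, e2]
  apply integral_mono_ae ((L2_real_integrable_mul V V).const_mul m)
    (L2_real_integrable_mul U V)
  filter_upwards [hb, hUcoe, hVcoe] with x h1 h2 h3
  have h3' : V x = (g : ℝ → ℝ) x - h x := by rw [h3]; rfl
  rw [h2, h3']
  have : m * ((g : ℝ → ℝ) x - h x) ^ 2 = m * (((g : ℝ → ℝ) x - h x) * ((g : ℝ → ℝ) x - h x)) := by
    ring
  rw [← this]
  simpa using h1

end Operator

section Primitive

variable {a c : ℝ}

lemma restrict_Ioo_eq {x : ℝ} (hx : x ≤ c) :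
    (volume.restrict (Ioo a c)).restrict (Ioo a x) = volume.restrict (Ioo a x) := by
  rw [Measure.restrict_restrict measurableSet_Ioo,
    inter_eq_left.2 (Ioo_subset_Ioo_right hx)]

lemma prim_congr {u v : ℝ → ℝ} (huv : u =ᵐ[volume.restrict (Ioo a c)] v) {x : ℝ}
    (hx : x ≤ c) :
    ∫ t in Ioo a x, u t = ∫ t in Ioo a x, v t := by
  rw [← restrict_Ioo_eq (a := a) hx]
  exact integral_congr_ae (huv.filter_mono (ae_mono Measure.restrict_le_self))

lemma lp_integrable (u : Lp ℝ 2 (volume.restrict (Ioo a c))) :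
    IntegrableOn (u : ℝ → ℝ) (Ioo a c) volume :=
  haveI := fin_meas a c
  (Lp.memLp u).integrable (by norm_num)

lemma lp_integrableOn (u : Lp ℝ 2 (volume.restrict (Ioo a c))) {x : ℝ} (hx : x ≤ c) :
    IntegrableOn (u : ℝ → ℝ) (Ioo a x) volume :=
  (lp_integrable u).mono_set (Ioo_subset_Ioo_right hx)

/-- The primitive of (the indicator extension of) an L² function: a continuous function
agreeing with `x ↦ ∫_{Ioo a x} u` on `Ioo a c`, bounded by the L¹ norm of `u`. -/
lemma prim_exists (u : Lp ℝ 2 (volume.restrict (Ioo a c))) :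
    ∃ P : ℝ → ℝ, Continuous P ∧
      (∀ x ∈ Ioo a c, ∫ t in Ioo a x, u t = P x) ∧
      (∀ x, |P x| ≤ ∫ t, |u t| ∂(volume.restrict (Ioo a c))) := by
  set w : ℝ → ℝ := (Ioo a c).indicator u with hw
  have hwint : Integrable w volume :=
    (lp_integrable u).integrable_indicator measurableSet_Ioo
  refine ⟨fun x => ∫ t in a..x, w t, ?_, ?_, ?_⟩
  · exact intervalIntegral.continuous_primitive (fun _ _ => hwint.intervalIntegrable) a
  · intro x hx
    show _ = ∫ t in a..x, w t
    rw [intervalIntegral.integral_of_le (le_of_lt hx.1), integral_Ioc_eq_integral_Ioo]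
    refine (setIntegral_congr_fun measurableSet_Ioo ?_).symm
    intro t ht
    have : t ∈ Ioo a c := ⟨ht.1, lt_trans ht.2 hx.2⟩
    simp [hw, Set.indicator_of_mem this]
  · intro x
    show |∫ t in a..x, w t| ≤ _
    have h1 : |∫ t in a..x, w t| ≤ ∫ t in uIoc a x, |w t| := by
      simpa [Real.norm_eq_abs] using
        intervalIntegral.norm_integral_le_integral_norm_uIoc (f := w) (a := a) (b := x)
          (μ := volume)
    have h2 : ∫ t in uIoc a x, |w t| ≤ ∫ t, |w t| := by
      apply setIntegral_le_integral hwint.abs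
      filter_upwards with t using abs_nonneg _
    have h3 : ∫ t, |w t| = ∫ t, |u t| ∂(volume.restrict (Ioo a c)) := by
      have : (fun t => |w t|) = (Ioo a c).indicator fun t => |(u : ℝ → ℝ) t| := by
        funext t
        by_cases ht : t ∈ Ioo a c <;> simp [hw, Set.indicator_apply, ht]
      rw [this, integral_indicator measurableSet_Ioo]
    linarith
end Primitive

section Functional

variable {a c : ℝ}

lemma funA_integrable (f u : Lp ℝ 2 (volume.restrict (Ioo a c))) :
    Integrable (fun x => f x * ∫ t in Ioo a x, u t) (volume.restrict (Ioo a c)) := by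
  obtain ⟨P, hPc, hPeq, hPbd⟩ := prim_exists u
  have hcong : (fun x => f x * ∫ t in Ioo a x, u t)
      =ᵐ[volume.restrict (Ioo a c)] fun x => P x * f x := by
    filter_upwards [ae_restrict_mem measurableSet_Ioo] with x hx
    rw [hPeq x hx]; ring
  rw [integrable_congr hcong]
  exact (lp_integrable f).bdd_mul hPc.aestronglyMeasurable
    (Filter.Eventually.of_forall fun x => by simpa [Real.norm_eq_abs] using hPbd x)

lemma funA_bound (f u : Lp ℝ 2 (volume.restrict (Ioo a c))) :
    |∫ x, f x * (∫ t in Ioo a x, u t) ∂(volume.restrict (Ioo a c))|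
      ≤ (∫ x, |f x| ∂(volume.restrict (Ioo a c)))
        * (∫ t, |u t| ∂(volume.restrict (Ioo a c))) := by
  obtain ⟨P, hPc, hPeq, hPbd⟩ := prim_exists u
  have h1 : |∫ x, f x * (∫ t in Ioo a x, u t) ∂(volume.restrict (Ioo a c))|
      ≤ ∫ x, |f x * ∫ t in Ioo a x, u t| ∂(volume.restrict (Ioo a c)) := by
    simpa only [Real.norm_eq_abs] using
      norm_integral_le_integral_norm (μ := volume.restrict (Ioo a c))
        (f := fun x => f x * ∫ t in Ioo a x, u t)
  refine h1.trans ?_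
  have h2 : ∫ x, |f x * ∫ t in Ioo a x, u t| ∂(volume.restrict (Ioo a c))
      ≤ ∫ x, |f x| * (∫ t, |u t| ∂(volume.restrict (Ioo a c)))
          ∂(volume.restrict (Ioo a c)) := by
    refine integral_mono_ae (funA_integrable f u).abs
      ((lp_integrable f).abs.mul_const _) ?_
    filter_upwards [ae_restrict_mem measurableSet_Ioo] with x hx
    rw [abs_mul, hPeq x hx]
    exact mul_le_mul_of_nonneg_left (hPbd x) (abs_nonneg _)
  refine h2.trans ?_
  rw [integral_mul_const]

lemma funA_add (f u v : Lp ℝ 2 (volume.restrict (Ioo a c))) :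
    ∫ x, f x * (∫ t in Ioo a x, (u + v : Lp ℝ 2 (volume.restrict (Ioo a c))) t)
        ∂(volume.restrict (Ioo a c))
      = (∫ x, f x * (∫ t in Ioo a x, u t) ∂(volume.restrict (Ioo a c)))
        + ∫ x, f x * (∫ t in Ioo a x, v t) ∂(volume.restrict (Ioo a c)) := by
  rw [← integral_add (funA_integrable f u) (funA_integrable f v)]
  refine integral_congr_ae ?_
  filter_upwards [ae_restrict_mem measurableSet_Ioo] with x hx
  have h1 : ∫ t in Ioo a x, (u + v : Lp ℝ 2 (volume.restrict (Ioo a c))) t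
      = ∫ t in Ioo a x, ((u : ℝ → ℝ) t + v t) :=
    prim_congr (by filter_upwards [Lp.coeFn_add u v] with t ht using by rw [ht]; rfl)
      (le_of_lt hx.2)
  have h2 : ∫ t in Ioo a x, ((u : ℝ → ℝ) t + v t)
      = (∫ t in Ioo a x, u t) + ∫ t in Ioo a x, v t :=
    integral_add (lp_integrableOn u (le_of_lt hx.2)) (lp_integrableOn v (le_of_lt hx.2))
  simp only [h1, h2]
  ring

lemma funA_smul (r : ℝ) (f u : Lp ℝ 2 (volume.restrict (Ioo a c))) :
    ∫ x, f x * (∫ t in Ioo a x, (r • u : Lp ℝ 2 (volume.restrict (Ioo a c))) t)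
        ∂(volume.restrict (Ioo a c))
      = r * ∫ x, f x * (∫ t in Ioo a x, u t) ∂(volume.restrict (Ioo a c)) := by
  rw [← integral_const_mul]
  refine integral_congr_ae ?_
  filter_upwards [ae_restrict_mem measurableSet_Ioo] with x hx
  have h1 : ∫ t in Ioo a x, (r • u : Lp ℝ 2 (volume.restrict (Ioo a c))) t
      = ∫ t in Ioo a x, r * (u : ℝ → ℝ) t :=
    prim_congr (by filter_upwards [Lp.coeFn_smul r u] with t ht using by rw [ht]; rfl)
      (le_of_lt hx.2)
  simp only [h1, integral_const_mul]
  try ring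

lemma backward_split (u : Lp ℝ 2 (volume.restrict (Ioo a c))) {x : ℝ} (hx : x ∈ Ioo a c) :
    ∫ t in Ioo x c, u t
      = (∫ t, u t ∂(volume.restrict (Ioo a c))) - ∫ t in Ioo a x, u t := by
  have hsplit : Ioo a c = Ioc a x ∪ Ioo x c := by
    ext t
    simp only [mem_Ioo, mem_union, mem_Ioc]
    constructor
    · rintro ⟨h1, h2⟩
      rcases le_or_gt t x with h | h
      · exact Or.inl ⟨h1, h⟩
      · exact Or.inr ⟨h, h2⟩
    · rintro (⟨h1, h2⟩ | ⟨h1, h2⟩)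
      · exact ⟨h1, lt_of_le_of_lt h2 hx.2⟩
      · exact ⟨lt_trans hx.1 h1, h2⟩
  have hdisj : Disjoint (Ioc a x) (Ioo x c) := by
    rw [Set.disjoint_left]
    rintro t ⟨_, h2⟩ ⟨h3, _⟩
    exact absurd h3 (not_lt.2 h2)
  have hu1 : IntegrableOn (u : ℝ → ℝ) (Ioc a x) volume :=
    (lp_integrable u).mono_set (by rw [hsplit]; exact subset_union_left)
  have hu2 : IntegrableOn (u : ℝ → ℝ) (Ioo x c) volume :=
    (lp_integrable u).mono_set (by rw [hsplit]; exact subset_union_right)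
  have key : ∫ t in Ioc a x ∪ Ioo x c, (u : ℝ → ℝ) t
      = (∫ t in Ioc a x, u t) + ∫ t in Ioo x c, u t :=
    setIntegral_union hdisj measurableSet_Ioo hu1 hu2
  have htot : ∫ t, u t ∂(volume.restrict (Ioo a c))
      = ∫ t in Ioc a x ∪ Ioo x c, (u : ℝ → ℝ) t := by
    rw [← hsplit]
  have hIoc : ∫ t in Ioc a x, (u : ℝ → ℝ) t = ∫ t in Ioo a x, u t :=
    integral_Ioc_eq_integral_Ioo
  rw [htot, key, hIoc]
  ring

end Functional

lemma restrict_Ioo_eq' {a c x : ℝ} (hx : a ≤ x) :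
    (volume.restrict (Ioo a c)).restrict (Ioo x c) = volume.restrict (Ioo x c) := by
  rw [Measure.restrict_restrict measurableSet_Ioo,
    inter_eq_left.2 (Ioo_subset_Ioo_left hx)]

lemma prim_congr' {a c : ℝ} {u v : ℝ → ℝ} (huv : u =ᵐ[volume.restrict (Ioo a c)] v) {x : ℝ}
    (hx : a ≤ x) :
    ∫ t in Ioo x c, u t = ∫ t in Ioo x c, v t := by
  rw [← restrict_Ioo_eq' (c := c) hx]
  exact integral_congr_ae (huv.filter_mono (ae_mono Measure.restrict_le_self))

lemma le_of_sq_le_sq' {x y : ℝ} (hx : 0 ≤ x) (hy : 0 ≤ y) (h : x ^ 2 ≤ y ^ 2) : x ≤ y := by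
  nlinarith

set_option maxHeartbeats 2000000 in
theorem spring_rods_exists_unique_weak_solution
    (a b l : ℝ) (hl : 0 < l) (ha : a < -l) (hb : l < b)
    (L₁ L₂ : ℝ) (hL₁ : L₁ = -l - a) (hL₂ : L₂ = b - l)
    (F₁ F₂ : ℝ → ℝ → ℝ)
    (hF₁meas : ∀ r : ℝ, Measurable fun x => F₁ x r)
    (hF₂meas : ∀ r : ℝ, Measurable fun x => F₂ x r)
    (hF₁cont : ∀ x : ℝ, Continuous fun r => F₁ x r)
    (hF₂cont : ∀ x : ℝ, Continuous fun r => F₂ x r)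
    (m₁ M₁ m₂ M₂ : ℝ) (hm₁ : 0 < m₁) (hM₁ : 0 < M₁) (hm₂ : 0 < m₂) (hM₂ : 0 < M₂)
    (hF₁mono : ∀ᵐ x ∂volume.restrict (Set.Ioo a (-l)),
      ∀ r s : ℝ, m₁ * |r - s| ^ 2 ≤ (F₁ x r - F₁ x s) * (r - s))
    (hF₁lip : ∀ᵐ x ∂volume.restrict (Set.Ioo a (-l)),
      ∀ r s : ℝ, |F₁ x r - F₁ x s| ≤ M₁ * |r - s|)
    (hF₁zero : ∀ᵐ x ∂volume.restrict (Set.Ioo a (-l)), F₁ x 0 = 0)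
    (hF₂mono : ∀ᵐ x ∂volume.restrict (Set.Ioo l b),
      ∀ r s : ℝ, m₂ * |r - s| ^ 2 ≤ (F₂ x r - F₂ x s) * (r - s))
    (hF₂lip : ∀ᵐ x ∂volume.restrict (Set.Ioo l b),
      ∀ r s : ℝ, |F₂ x r - F₂ x s| ≤ M₂ * |r - s|)
    (hF₂zero : ∀ᵐ x ∂volume.restrict (Set.Ioo l b), F₂ x 0 = 0)
    (p : ℝ → ℝ) (Cp : ℝ) (hCp : 0 < Cp)
    (hp_lip : ∀ r s : ℝ, |p r - p s| ≤ Cp * |r - s|)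
    (hp_pos : ∀ r : ℝ, r < 2 * l → 0 < p r)
    (hp_neg : ∀ r : ℝ, 2 * l < r → p r < 0)
    (hsmall : 2 * Cp * max L₁ L₂ < min m₁ m₂)
    (f₁ : Lp ℝ 2 (volume.restrict (Set.Ioo a (-l))))
    (f₂ : Lp ℝ 2 (volume.restrict (Set.Ioo l b))) :
    ∃! g : Lp ℝ 2 (volume.restrict (Set.Ioo a (-l))) ×
           Lp ℝ 2 (volume.restrict (Set.Ioo l b)),
      springLength a b l g.1 g.2 ≥ 0 ∧
      ∀ h : Lp ℝ 2 (volume.restrict (Set.Ioo a (-l))) ×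
            Lp ℝ 2 (volume.restrict (Set.Ioo l b)),
        springLength a b l h.1 h.2 ≥ 0 →
        (∫ x in Set.Ioo a (-l), F₁ x (g.1 x) * (h.1 x - g.1 x)) +
          (∫ x in Set.Ioo l b, F₂ x (g.2 x) * (h.2 x - g.2 x)) -
          p (springLength a b l g.1 g.2) *
            (springLength a b l h.1 h.2 - springLength a b l g.1 g.2)
        ≥ (∫ x in Set.Ioo a (-l), f₁ x * ∫ t in Set.Ioo a x, (h.1 t - g.1 t)) +
          (∫ x in Set.Ioo l b, f₂ x * ∫ t in Set.Ioo x b, (g.2 t - h.2 t)) := by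
  have hla : a ≤ -l := le_of_lt ha
  have hlb : l ≤ b := le_of_lt hb
  have hL₁pos : 0 < L₁ := by rw [hL₁]; linarith
  have hL₂pos : 0 < L₂ := by rw [hL₂]; linarith
  haveI := fin_meas a (-l)
  haveI := fin_meas l b
  -- Nemytskii operators
  let N₁ : Lp ℝ 2 (volume.restrict (Set.Ioo a (-l))) →
      Lp ℝ 2 (volume.restrict (Set.Ioo a (-l))) :=
    fun g => (nemytskii_memLp hF₁meas hF₁cont hF₁lip hF₁zero g).toLp _
  let N₂ : Lp ℝ 2 (volume.restrict (Set.Ioo l b)) →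
      Lp ℝ 2 (volume.restrict (Set.Ioo l b)) :=
    fun g => (nemytskii_memLp hF₂meas hF₂cont hF₂lip hF₂zero g).toLp _
  have hN₁coe : ∀ g, (N₁ g : ℝ → ℝ) =ᵐ[volume.restrict (Set.Ioo a (-l))]
      fun x => F₁ x (g x) := fun g => MemLp.coeFn_toLp _
  have hN₂coe : ∀ g, (N₂ g : ℝ → ℝ) =ᵐ[volume.restrict (Set.Ioo l b)]
      fun x => F₂ x (g x) := fun g => MemLp.coeFn_toLp _
  have hmono₁ : ∀ g h, m₁ * ‖g - h‖ ^ 2 ≤ ⟪N₁ g - N₁ h, g - h⟫ := by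
    intro g h
    refine toLp_sub_inner_ge _ _ g h ?_
    filter_upwards [hF₁mono] with x hx
    have := hx (g x) (h x)
    calc m₁ * ((g : ℝ → ℝ) x - h x) ^ 2 = m₁ * |(g : ℝ → ℝ) x - h x| ^ 2 := by rw [sq_abs]
      _ ≤ _ := this
  have hmono₂ : ∀ g h, m₂ * ‖g - h‖ ^ 2 ≤ ⟪N₂ g - N₂ h, g - h⟫ := by
    intro g h
    refine toLp_sub_inner_ge _ _ g h ?_
    filter_upwards [hF₂mono] with x hx
    have := hx (g x) (h x)
    calc m₂ * ((g : ℝ → ℝ) x - h x) ^ 2 = m₂ * |(g : ℝ → ℝ) x - h x| ^ 2 := by rw [sq_abs]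
      _ ≤ _ := this
  have hlip₁ : ∀ g h, ‖N₁ g - N₁ h‖ ≤ M₁ * ‖g - h‖ := by
    intro g h
    refine toLp_sub_norm_le _ _ (le_of_lt hM₁) g h ?_
    filter_upwards [hF₁lip] with x hx using hx (g x) (h x)
  have hlip₂ : ∀ g h, ‖N₂ g - N₂ h‖ ≤ M₂ * ‖g - h‖ := by
    intro g h
    refine toLp_sub_norm_le _ _ (le_of_lt hM₂) g h ?_
    filter_upwards [hF₂lip] with x hx using hx (g x) (h x)
  -- the Hilbert space
  let e₁ := constOne a (-l)
  let e₂ := constOne l b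
  let Gmap : Lp ℝ 2 (volume.restrict (Set.Ioo a (-l))) × Lp ℝ 2 (volume.restrict (Set.Ioo l b))
      → WithLp 2 (Lp ℝ 2 (volume.restrict (Set.Ioo a (-l)))
          × Lp ℝ 2 (volume.restrict (Set.Ioo l b))) :=
    fun g => (WithLp.equiv 2 _).symm g
  let EE := Gmap (e₁, e₂)
  have hEE : ‖EE‖ ^ 2 = L₁ + L₂ := by
    rw [WithLp.prod_norm_sq_eq_of_L2 EE]
    show ‖e₁‖ ^ 2 + ‖e₂‖ ^ 2 = L₁ + L₂
    rw [norm_constOne_sq hla, norm_constOne_sq hlb, hL₁, hL₂]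
  have hEEnn : (0:ℝ) ≤ L₁ + L₂ := by positivity
  let Nmap := fun x : WithLp 2 (Lp ℝ 2 (volume.restrict (Set.Ioo a (-l)))
      × Lp ℝ 2 (volume.restrict (Set.Ioo l b))) => Gmap (N₁ x.fst, N₂ x.snd)
  have hNmono : ∀ x y, min m₁ m₂ * ‖x - y‖ ^ 2 ≤ ⟪Nmap x - Nmap y, x - y⟫ := by
    intro x y
    have e : ⟪Nmap x - Nmap y, x - y⟫
        = ⟪N₁ x.fst - N₁ y.fst, x.fst - y.fst⟫ + ⟪N₂ x.snd - N₂ y.snd, x.snd - y.snd⟫ :=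
      WithLp.prod_inner_apply _ _
    have hn : ‖x - y‖ ^ 2 = ‖x.fst - y.fst‖ ^ 2 + ‖x.snd - y.snd‖ ^ 2 :=
      WithLp.prod_norm_sq_eq_of_L2 (x - y)
    have h1 := hmono₁ x.fst y.fst
    have h2 := hmono₂ x.snd y.snd
    have hm1 : min m₁ m₂ ≤ m₁ := min_le_left _ _
    have hm2 : min m₁ m₂ ≤ m₂ := min_le_right _ _
    rw [e, hn]
    nlinarith [sq_nonneg ‖x.fst - y.fst‖, sq_nonneg ‖x.snd - y.snd‖]
  have hNlip : ∀ x y, ‖Nmap x - Nmap y‖ ≤ max M₁ M₂ * ‖x - y‖ := by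
    intro x y
    have e : ‖Nmap x - Nmap y‖ ^ 2 = ‖N₁ x.fst - N₁ y.fst‖ ^ 2 + ‖N₂ x.snd - N₂ y.snd‖ ^ 2 :=
      WithLp.prod_norm_sq_eq_of_L2 _
    have hn : ‖x - y‖ ^ 2 = ‖x.fst - y.fst‖ ^ 2 + ‖x.snd - y.snd‖ ^ 2 :=
      WithLp.prod_norm_sq_eq_of_L2 (x - y)
    have h1 := hlip₁ x.fst y.fst
    have h2 := hlip₂ x.snd y.snd
    have hM1 : M₁ ≤ max M₁ M₂ := le_max_left _ _
    have hM2 : M₂ ≤ max M₁ M₂ := le_max_right _ _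
    have h1' : ‖N₁ x.fst - N₁ y.fst‖ ≤ max M₁ M₂ * ‖x.fst - y.fst‖ :=
      h1.trans (mul_le_mul_of_nonneg_right hM1 (norm_nonneg _))
    have h2' : ‖N₂ x.snd - N₂ y.snd‖ ≤ max M₁ M₂ * ‖x.snd - y.snd‖ :=
      h2.trans (mul_le_mul_of_nonneg_right hM2 (norm_nonneg _))
    have b1 : ‖N₁ x.fst - N₁ y.fst‖ ^ 2 ≤ (max M₁ M₂ * ‖x.fst - y.fst‖) ^ 2 :=
      pow_le_pow_left₀ (norm_nonneg _) h1' 2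
    have b2 : ‖N₂ x.snd - N₂ y.snd‖ ^ 2 ≤ (max M₁ M₂ * ‖x.snd - y.snd‖) ^ 2 :=
      pow_le_pow_left₀ (norm_nonneg _) h2' 2
    have hsq : ‖Nmap x - Nmap y‖ ^ 2 ≤ (max M₁ M₂ * ‖x - y‖) ^ 2 := by
      rw [e, mul_pow, hn]
      rw [mul_pow] at b1 b2
      linarith
    exact le_of_sq_le_sq' (norm_nonneg _) (by positivity) hsq
  -- the continuous linear functional representing the right-hand side
  let A₁ : Lp ℝ 2 (volume.restrict (Set.Ioo a (-l))) → ℝ :=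
    fun u => ∫ x, f₁ x * (∫ t in Set.Ioo a x, u t) ∂(volume.restrict (Set.Ioo a (-l)))
  let A₂ : Lp ℝ 2 (volume.restrict (Set.Ioo l b)) → ℝ :=
    fun u => ∫ x, f₂ x * (∫ t in Set.Ioo l x, u t) ∂(volume.restrict (Set.Ioo l b))
  let c₂ : ℝ := ∫ x, f₂ x ∂(volume.restrict (Set.Ioo l b))
  let ℓfun := fun v : WithLp 2 (Lp ℝ 2 (volume.restrict (Set.Ioo a (-l)))
      × Lp ℝ 2 (volume.restrict (Set.Ioo l b))) => A₁ v.fst + A₂ v.snd - ⟪e₂, v.snd⟫ * c₂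
  have ℓadd : ∀ v w', ℓfun (v + w') = ℓfun v + ℓfun w' := by
    intro v w'
    have e1 : A₁ (v.fst + w'.fst) = A₁ v.fst + A₁ w'.fst := funA_add f₁ v.fst w'.fst
    have e2 : A₂ (v.snd + w'.snd) = A₂ v.snd + A₂ w'.snd := funA_add f₂ v.snd w'.snd
    have e3 : ⟪e₂, v.snd + w'.snd⟫ = ⟪e₂, v.snd⟫ + ⟪e₂, w'.snd⟫ := inner_add_right _ _ _
    show A₁ (v.fst + w'.fst) + A₂ (v.snd + w'.snd) - ⟪e₂, v.snd + w'.snd⟫ * c₂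
        = (A₁ v.fst + A₂ v.snd - ⟪e₂, v.snd⟫ * c₂) + (A₁ w'.fst + A₂ w'.snd - ⟪e₂, w'.snd⟫ * c₂)
    rw [e1, e2, e3]; ring
  have ℓsmul : ∀ (r : ℝ) v, ℓfun (r • v) = r * ℓfun v := by
    intro r v
    have e1 : A₁ (r • v.fst) = r * A₁ v.fst := funA_smul r f₁ v.fst
    have e2 : A₂ (r • v.snd) = r * A₂ v.snd := funA_smul r f₂ v.snd
    have e3 : ⟪e₂, r • v.snd⟫ = r * ⟪e₂, v.snd⟫ := real_inner_smul_right _ _ _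
    show A₁ (r • v.fst) + A₂ (r • v.snd) - ⟪e₂, r • v.snd⟫ * c₂
        = r * (A₁ v.fst + A₂ v.snd - ⟪e₂, v.snd⟫ * c₂)
    rw [e1, e2, e3]; ring
  have hcomp : ∀ v : WithLp 2 (Lp ℝ 2 (volume.restrict (Set.Ioo a (-l)))
      × Lp ℝ 2 (volume.restrict (Set.Ioo l b))), ‖v.fst‖ ≤ ‖v‖ ∧ ‖v.snd‖ ≤ ‖v‖ := by
    intro v
    have hn := WithLp.prod_norm_sq_eq_of_L2 v
    constructor
    · exact le_of_sq_le_sq' (norm_nonneg _) (norm_nonneg _) (by nlinarith [sq_nonneg ‖v.snd‖])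
    · exact le_of_sq_le_sq' (norm_nonneg _) (norm_nonneg _) (by nlinarith [sq_nonneg ‖v.fst‖])
  have hA₁bd : ∀ u, |A₁ u| ≤ ((∫ x, |f₁ x| ∂(volume.restrict (Set.Ioo a (-l))))
      * Real.sqrt (-l - a)) * ‖u‖ := by
    intro u
    refine (funA_bound f₁ u).trans ?_
    rw [mul_assoc]
    exact mul_le_mul_of_nonneg_left (integral_abs_le_sqrt_norm hla u)
      (integral_nonneg fun x => abs_nonneg _)
  have hA₂bd : ∀ u, |A₂ u| ≤ ((∫ x, |f₂ x| ∂(volume.restrict (Set.Ioo l b)))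
      * Real.sqrt (b - l)) * ‖u‖ := by
    intro u
    refine (funA_bound f₂ u).trans ?_
    rw [mul_assoc]
    exact mul_le_mul_of_nonneg_left (integral_abs_le_sqrt_norm hlb u)
      (integral_nonneg fun x => abs_nonneg _)
  have hC₁nn : 0 ≤ (∫ x, |f₁ x| ∂(volume.restrict (Set.Ioo a (-l)))) * Real.sqrt (-l - a) :=
    mul_nonneg (integral_nonneg fun x => abs_nonneg _) (Real.sqrt_nonneg _)
  have hC₂nn : 0 ≤ (∫ x, |f₂ x| ∂(volume.restrict (Set.Ioo l b))) * Real.sqrt (b - l) :=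
    mul_nonneg (integral_nonneg fun x => abs_nonneg _) (Real.sqrt_nonneg _)
  have ℓbound : ∀ v, ‖ℓfun v‖ ≤ ((∫ x, |f₁ x| ∂(volume.restrict (Set.Ioo a (-l))))
        * Real.sqrt (-l - a)
      + (∫ x, |f₂ x| ∂(volume.restrict (Set.Ioo l b))) * Real.sqrt (b - l)
      + ‖e₂‖ * |c₂|) * ‖v‖ := by
    intro v
    have h1 := hA₁bd v.fst
    have h2 := hA₂bd v.snd
    have h3 : |⟪e₂, v.snd⟫ * c₂| ≤ ‖e₂‖ * |c₂| * ‖v.snd‖ := by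
      rw [abs_mul]
      have := abs_real_inner_le_norm e₂ v.snd
      nlinarith [abs_nonneg c₂, norm_nonneg v.snd, abs_nonneg (⟪e₂, v.snd⟫)]
    have hv1 := (hcomp v).1
    have hv2 := (hcomp v).2
    have habs : ‖ℓfun v‖ ≤ |A₁ v.fst| + |A₂ v.snd| + |⟪e₂, v.snd⟫ * c₂| := by
      rw [Real.norm_eq_abs]
      show |A₁ v.fst + A₂ v.snd - ⟪e₂, v.snd⟫ * c₂| ≤ _
      calc |A₁ v.fst + A₂ v.snd - ⟪e₂, v.snd⟫ * c₂|
          ≤ |A₁ v.fst + A₂ v.snd| + |⟪e₂, v.snd⟫ * c₂| := abs_sub _ _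
        _ ≤ |A₁ v.fst| + |A₂ v.snd| + |⟪e₂, v.snd⟫ * c₂| := by
            have := abs_add_le (A₁ v.fst) (A₂ v.snd); linarith
    have s1 : ((∫ x, |f₁ x| ∂(volume.restrict (Set.Ioo a (-l)))) * Real.sqrt (-l - a)) * ‖v.fst‖
        ≤ ((∫ x, |f₁ x| ∂(volume.restrict (Set.Ioo a (-l)))) * Real.sqrt (-l - a)) * ‖v‖ :=
      mul_le_mul_of_nonneg_left hv1 hC₁nn
    have s2 : ((∫ x, |f₂ x| ∂(volume.restrict (Set.Ioo l b))) * Real.sqrt (b - l)) * ‖v.snd‖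
        ≤ ((∫ x, |f₂ x| ∂(volume.restrict (Set.Ioo l b))) * Real.sqrt (b - l)) * ‖v‖ :=
      mul_le_mul_of_nonneg_left hv2 hC₂nn
    have s3 : ‖e₂‖ * |c₂| * ‖v.snd‖ ≤ ‖e₂‖ * |c₂| * ‖v‖ :=
      mul_le_mul_of_nonneg_left hv2 (by positivity)
    nlinarith
  let ℓlin : WithLp 2 (Lp ℝ 2 (volume.restrict (Set.Ioo a (-l)))
      × Lp ℝ 2 (volume.restrict (Set.Ioo l b))) →ₗ[ℝ] ℝ :=
    { toFun := ℓfun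
      map_add' := ℓadd
      map_smul' := fun r v => by simpa using ℓsmul r v }
  let ℓ := ℓlin.mkContinuous _ ℓbound
  let w := (InnerProductSpace.toDual ℝ _).symm ℓ
  have hw : ∀ v, ⟪w, v⟫ = ℓfun v := fun v => InnerProductSpace.toDual_symm_apply
  -- the operator B
  let θf := fun x : WithLp 2 (Lp ℝ 2 (volume.restrict (Set.Ioo a (-l)))
      × Lp ℝ 2 (volume.restrict (Set.Ioo l b))) => 2 * l - ⟪EE, x⟫
  let B := fun x => Nmap x + p (θf x) • EE - w
  have hBdiff : ∀ x y, B x - B y = (Nmap x - Nmap y) + (p (θf x) - p (θf y)) • EE := by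
    intro x y
    show (Nmap x + p (θf x) • EE - w) - (Nmap y + p (θf y) • EE - w) = _
    rw [sub_smul]; abel
  have hθdiff : ∀ x y, θf x - θf y = -⟪EE, x - y⟫ := by
    intro x y
    show (2 * l - ⟪EE, x⟫) - (2 * l - ⟪EE, y⟫) = _
    rw [inner_sub_right]; ring
  have hsbound : ∀ x y, ⟪EE, x - y⟫ ^ 2 ≤ (L₁ + L₂) * ‖x - y‖ ^ 2 := by
    intro x y
    have h := abs_real_inner_le_norm EE (x - y)
    have h2 : |⟪EE, x - y⟫| ^ 2 ≤ (‖EE‖ * ‖x - y‖) ^ 2 :=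
      pow_le_pow_left₀ (abs_nonneg _) h 2
    rw [sq_abs, mul_pow, hEE] at h2
    linarith
  have hpdiff : ∀ x y, |p (θf x) - p (θf y)| ≤ Cp * |⟪EE, x - y⟫| := by
    intro x y
    have h := hp_lip (θf x) (θf y)
    have e : θf x - θf y = -⟪EE, x - y⟫ := hθdiff x y
    rw [e, abs_neg] at h
    exact h
  have hBmono : ∀ x y, (min m₁ m₂ - Cp * (L₁ + L₂)) * ‖x - y‖ ^ 2 ≤ ⟪B x - B y, x - y⟫ := by
    intro x y
    rw [hBdiff x y, inner_add_left, real_inner_smul_left]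
    have hN := hNmono x y
    have hpd := hpdiff x y
    have hs2 := hsbound x y
    have key : (p (θf x) - p (θf y)) * ⟪EE, x - y⟫ ≥ -(Cp * ⟪EE, x - y⟫ ^ 2) := by
      have h1 : -( |p (θf x) - p (θf y)| * |⟪EE, x - y⟫| )
          ≤ (p (θf x) - p (θf y)) * ⟪EE, x - y⟫ := by
        rw [← abs_mul]
        exact neg_abs_le _
      have h2 : |p (θf x) - p (θf y)| * |⟪EE, x - y⟫| ≤ Cp * |⟪EE, x - y⟫| * |⟪EE, x - y⟫| :=
        mul_le_mul_of_nonneg_right hpd (abs_nonneg _)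
      nlinarith [sq_abs (⟪EE, x - y⟫)]
    have h3 : Cp * ⟪EE, x - y⟫ ^ 2 ≤ Cp * ((L₁ + L₂) * ‖x - y‖ ^ 2) :=
      mul_le_mul_of_nonneg_left hs2 hCp.le
    nlinarith [hN, key, h3]
  have hBlip : ∀ x y, ‖B x - B y‖ ≤ (max M₁ M₂ + Cp * (L₁ + L₂)) * ‖x - y‖ := by
    intro x y
    rw [hBdiff x y]
    refine (norm_add_le _ _).trans ?_
    rw [norm_smul, Real.norm_eq_abs]
    have h1 := hNlip x y
    have hpd := hpdiff x y
    have hs1 : |⟪EE, x - y⟫| ≤ ‖EE‖ * ‖x - y‖ := abs_real_inner_le_norm _ _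
    have h2 : |p (θf x) - p (θf y)| * ‖EE‖ ≤ Cp * (L₁ + L₂) * ‖x - y‖ := by
      calc |p (θf x) - p (θf y)| * ‖EE‖ ≤ (Cp * |⟪EE, x - y⟫|) * ‖EE‖ :=
          mul_le_mul_of_nonneg_right hpd (norm_nonneg _)
        _ ≤ (Cp * (‖EE‖ * ‖x - y‖)) * ‖EE‖ := by
            have := mul_le_mul_of_nonneg_left hs1 hCp.le
            exact mul_le_mul_of_nonneg_right this (norm_nonneg _)
        _ = Cp * ‖EE‖ ^ 2 * ‖x - y‖ := by ring
        _ = Cp * (L₁ + L₂) * ‖x - y‖ := by rw [hEE]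
    have : max M₁ M₂ * ‖x - y‖ + |p (θf x) - p (θf y)| * ‖EE‖
        ≤ (max M₁ M₂ + Cp * (L₁ + L₂)) * ‖x - y‖ := by nlinarith
    linarith
  have hαpos : 0 < min m₁ m₂ - Cp * (L₁ + L₂) := by
    have hm1 : L₁ ≤ max L₁ L₂ := le_max_left _ _
    have hm2 : L₂ ≤ max L₁ L₂ := le_max_right _ _
    nlinarith
  have hMpos : 0 < max M₁ M₂ + Cp * (L₁ + L₂) := by
    have : 0 < max M₁ M₂ := lt_max_of_lt_left hM₁
    nlinarith
  -- the convex set K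
  let K : Set (WithLp 2 (Lp ℝ 2 (volume.restrict (Set.Ioo a (-l)))
      × Lp ℝ 2 (volume.restrict (Set.Ioo l b)))) := {x | ⟪EE, x⟫ ≤ 2 * l}
  have hKcl : IsClosed K := isClosed_le (continuous_const.inner continuous_id) continuous_const
  have hKconv : Convex ℝ K := by
    intro x hx y hy s t hs ht hst
    have hx' : ⟪EE, x⟫ ≤ 2 * l := hx
    have hy' : ⟪EE, y⟫ ≤ 2 * l := hy
    show ⟪EE, s • x + t • y⟫ ≤ 2 * l
    rw [inner_add_right, real_inner_smul_right, real_inner_smul_right]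
    nlinarith
  have hKne : K.Nonempty := ⟨0, by
    show ⟪EE, (0 : WithLp 2 (Lp ℝ 2 (volume.restrict (Set.Ioo a (-l)))
      × Lp ℝ 2 (volume.restrict (Set.Ioo l b))))⟫ ≤ 2 * l
    rw [inner_zero_right]; linarith⟩
  obtain ⟨x₀, ⟨hx₀K, hx₀VI⟩, huni⟩ :=
    my_stampacchia hKconv hKcl hKne B _ _ hαpos hMpos hBlip hBmono
  -- translation between abstract and concrete formulations
  have spring_eq : ∀ g : Lp ℝ 2 (volume.restrict (Set.Ioo a (-l)))
      × Lp ℝ 2 (volume.restrict (Set.Ioo l b)),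
      springLength a b l g.1 g.2 = 2 * l - ⟪EE, Gmap g⟫ := by
    intro g
    have iE : ⟪EE, Gmap g⟫ = ⟪e₁, g.1⟫ + ⟪e₂, g.2⟫ := WithLp.prod_inner_apply _ _
    have i1 : (∫ t in Set.Ioo a (-l), g.1 t) = ⟪e₁, g.1⟫ := (inner_constOne g.1).symm
    have i2 : (∫ t in Set.Ioo l b, g.2 t) = ⟪e₂, g.2⟫ := (inner_constOne g.2).symm
    show 2 * l - (∫ t in Set.Ioo a (-l), g.1 t) - ∫ t in Set.Ioo l b, g.2 t = _
    rw [i1, i2, iE]; ring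
  have t1 : ∀ g h : Lp ℝ 2 (volume.restrict (Set.Ioo a (-l)))
      × Lp ℝ 2 (volume.restrict (Set.Ioo l b)),
      (∫ x in Set.Ioo a (-l), F₁ x (g.1 x) * (h.1 x - g.1 x)) = ⟪N₁ g.1, h.1 - g.1⟫ := by
    intro g h
    rw [L2_real_inner]
    refine integral_congr_ae ?_
    filter_upwards [hN₁coe g.1, Lp.coeFn_sub h.1 g.1] with x h1 h2
    rw [h1, h2]; rfl
  have t2 : ∀ g h : Lp ℝ 2 (volume.restrict (Set.Ioo a (-l)))
      × Lp ℝ 2 (volume.restrict (Set.Ioo l b)),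
      (∫ x in Set.Ioo l b, F₂ x (g.2 x) * (h.2 x - g.2 x)) = ⟪N₂ g.2, h.2 - g.2⟫ := by
    intro g h
    rw [L2_real_inner]
    refine integral_congr_ae ?_
    filter_upwards [hN₂coe g.2, Lp.coeFn_sub h.2 g.2] with x h1 h2
    rw [h1, h2]; rfl
  have r1 : ∀ g h : Lp ℝ 2 (volume.restrict (Set.Ioo a (-l)))
      × Lp ℝ 2 (volume.restrict (Set.Ioo l b)),
      (∫ x in Set.Ioo a (-l), f₁ x * ∫ t in Set.Ioo a x, (h.1 t - g.1 t))
        = A₁ (h.1 - g.1) := by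
    intro g h
    refine (integral_congr_ae ?_)
    filter_upwards [ae_restrict_mem measurableSet_Ioo] with x hx
    congr 1
    have hc : (⇑(h.1 - g.1) : ℝ → ℝ) =ᵐ[volume.restrict (Set.Ioo a (-l))]
        fun t => h.1 t - g.1 t := by
      filter_upwards [Lp.coeFn_sub h.1 g.1] with t ht
      rw [ht]; rfl
    exact (prim_congr hc (le_of_lt hx.2)).symm
  have r2 : ∀ g h : Lp ℝ 2 (volume.restrict (Set.Ioo a (-l)))
      × Lp ℝ 2 (volume.restrict (Set.Ioo l b)),
      (∫ x in Set.Ioo l b, f₂ x * ∫ t in Set.Ioo x b, (g.2 t - h.2 t))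
        = A₂ (h.2 - g.2) - ⟪e₂, h.2 - g.2⟫ * c₂ := by
    intro g h
    have hI : ⟪e₂, h.2 - g.2⟫
        = ∫ t, (h.2 - g.2 : Lp ℝ 2 (volume.restrict (Set.Ioo l b))) t
            ∂(volume.restrict (Set.Ioo l b)) := inner_constOne _
    have step : (∫ x in Set.Ioo l b, f₂ x * ∫ t in Set.Ioo x b, (g.2 t - h.2 t))
        = ∫ x, (f₂ x * (∫ t in Set.Ioo l x,
              (h.2 - g.2 : Lp ℝ 2 (volume.restrict (Set.Ioo l b))) t)
            - f₂ x * (∫ t, (h.2 - g.2 : Lp ℝ 2 (volume.restrict (Set.Ioo l b))) t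
                ∂(volume.restrict (Set.Ioo l b))))
          ∂(volume.restrict (Set.Ioo l b)) := by
      refine integral_congr_ae ?_
      filter_upwards [ae_restrict_mem measurableSet_Ioo] with x hx
      have e1 : ∫ t in Set.Ioo x b, ((g.2 : ℝ → ℝ) t - h.2 t)
          = ∫ t in Set.Ioo x b,
              (-(⇑(h.2 - g.2 : Lp ℝ 2 (volume.restrict (Set.Ioo l b))))) t := by
        refine prim_congr' ?_ (le_of_lt hx.1)
        filter_upwards [Lp.coeFn_sub h.2 g.2] with t ht
        rw [Pi.neg_apply, ht, Pi.sub_apply]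
        ring
      have e2 : ∫ t in Set.Ioo x b,
            (-(⇑(h.2 - g.2 : Lp ℝ 2 (volume.restrict (Set.Ioo l b))))) t
          = -∫ t in Set.Ioo x b,
              (h.2 - g.2 : Lp ℝ 2 (volume.restrict (Set.Ioo l b))) t :=
        integral_neg _
      have e3 := backward_split (h.2 - g.2) hx
      rw [e1, e2, e3]
      ring
    rw [mul_comm (⟪e₂, h.2 - g.2⟫ : ℝ) c₂, hI, step,
      integral_sub (funA_integrable f₂ (h.2 - g.2))
        ((lp_integrable f₂).mul_const _), integral_mul_const]
  have innerB : ∀ x d, ⟪B x, d⟫ = ⟪Nmap x, d⟫ + p (θf x) * ⟪EE, d⟫ - ⟪w, d⟫ := by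
    intro x d
    show ⟪Nmap x + p (θf x) • EE - w, d⟫ = _
    rw [inner_sub_left, inner_add_left, real_inner_smul_left]
  have ineq_iff : ∀ g h : Lp ℝ 2 (volume.restrict (Set.Ioo a (-l)))
      × Lp ℝ 2 (volume.restrict (Set.Ioo l b)),
      ((∫ x in Set.Ioo a (-l), F₁ x (g.1 x) * (h.1 x - g.1 x)) +
        (∫ x in Set.Ioo l b, F₂ x (g.2 x) * (h.2 x - g.2 x)) -
        p (springLength a b l g.1 g.2) *
          (springLength a b l h.1 h.2 - springLength a b l g.1 g.2)
      ≥ (∫ x in Set.Ioo a (-l), f₁ x * ∫ t in Set.Ioo a x, (h.1 t - g.1 t)) +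
        (∫ x in Set.Ioo l b, f₂ x * ∫ t in Set.Ioo x b, (g.2 t - h.2 t)))
      ↔ 0 ≤ ⟪B (Gmap g), Gmap h - Gmap g⟫ := by
    intro g h
    have hB := innerB (Gmap g) (Gmap h - Gmap g)
    have hNg : ⟪Nmap (Gmap g), Gmap h - Gmap g⟫
        = ⟪N₁ g.1, h.1 - g.1⟫ + ⟪N₂ g.2, h.2 - g.2⟫ := WithLp.prod_inner_apply _ _
    have hwg : ⟪w, Gmap h - Gmap g⟫
        = A₁ (h.1 - g.1) + A₂ (h.2 - g.2) - ⟪e₂, h.2 - g.2⟫ * c₂ := hw _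
    have hθg : θf (Gmap g) = springLength a b l g.1 g.2 := (spring_eq g).symm
    have hsub : springLength a b l h.1 h.2 - springLength a b l g.1 g.2
        = -⟪EE, Gmap h - Gmap g⟫ := by
      rw [spring_eq g, spring_eq h, inner_sub_right]; ring
    rw [t1 g h, t2 g h, r1 g h, r2 g h, hsub, ← hθg, mul_neg]
    constructor
    · intro hge; linarith [hB, hNg, hwg]
    · intro hge; linarith [hB, hNg, hwg]
  have memK_iff : ∀ g : Lp ℝ 2 (volume.restrict (Set.Ioo a (-l)))
      × Lp ℝ 2 (volume.restrict (Set.Ioo l b)),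
      springLength a b l g.1 g.2 ≥ 0 ↔ Gmap g ∈ K := by
    intro g
    rw [spring_eq g]
    constructor
    · intro hge
      show ⟪EE, Gmap g⟫ ≤ 2 * l
      linarith
    · intro hle
      have : ⟪EE, Gmap g⟫ ≤ 2 * l := hle
      linarith
  -- conclusion
  refine ⟨WithLp.equiv 2 _ x₀, ⟨?_, ?_⟩, ?_⟩
  · have hGx : Gmap (WithLp.equiv 2 _ x₀) = x₀ := (WithLp.equiv 2 _).symm_apply_apply x₀
    rw [memK_iff, hGx]
    exact hx₀K
  · intro h hh
    have hGx : Gmap (WithLp.equiv 2 _ x₀) = x₀ := (WithLp.equiv 2 _).symm_apply_apply x₀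
    have hy : Gmap h ∈ K := (memK_iff h).1 hh
    have hVI := hx₀VI (Gmap h) hy
    rw [ineq_iff _ h, hGx]
    exact hVI
  · intro y hy
    have hyK : Gmap y ∈ K := (memK_iff y).1 hy.1
    have hyVI : ∀ z ∈ K, 0 ≤ ⟪B (Gmap y), z - Gmap y⟫ := by
      intro z hz
      have hGz : Gmap (WithLp.equiv 2 _ z) = z := (WithLp.equiv 2 _).symm_apply_apply z
      have hh : springLength a b l (WithLp.equiv 2 _ z).1 (WithLp.equiv 2 _ z).2 ≥ 0 := by
        rw [memK_iff, hGz]; exact hz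
      have := (ineq_iff y (WithLp.equiv 2 _ z)).1 (hy.2 _ hh)
      rwa [hGz] at this
    have hxy : Gmap y = x₀ := huni (Gmap y) ⟨hyK, hyVI⟩
    have : WithLp.equiv 2 _ (Gmap y) = y := (WithLp.equiv 2 _).apply_symm_apply y
    rw [← this, hxy]
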